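/- Let A¹,…,Aⁿ and B¹,…,Bⁿ be 2×2 real matrices such that for every 1 ≤ j ≤ n and 0 ≤ ℓ ≤ n−j, ‖A^{j+ℓ−1}···A^{j+1}A^j‖ ≤ C e^{dℓ} (products of ℓ consecutive A's starting at index j). Then ‖(Aⁿ+Bⁿ)···(A¹+B¹) − Aⁿ···A¹‖ ≤ C e^{dn} (∏_{j=1}^n (1 + C e^{−d}‖B^j‖) − 1). -/

import Mathlib

open scoped Matrix.Norms.L2Operator

private lemma gordon_aux (N : ℕ) (A B : ℕ → Matrix (Fin 2) (Fin 2) ℝ) (C d : ℝ) (hC : 0 < C)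
    (hA : ∀ j ℓ : ℕ, 1 ≤ j → j + ℓ ≤ N + 1 →
      ‖((List.range ℓ).reverse.map (fun i => A (j + i))).prod‖ ≤ C * Real.exp (d * ℓ)) :
    ∀ m : ℕ, m ≤ N → ∀ t : ℕ, m + t ≤ N →
      ‖((List.range t).reverse.map (fun i => A (m + 1 + i))).prod *
          (((List.range m).reverse.map (fun j => A (j + 1) + B (j + 1))).prod -
            ((List.range m).reverse.map (fun j => A (j + 1))).prod)‖ ≤
        C * Real.exp (d * (m + t)) *
          (((List.range m).map (fun j => 1 + C * Real.exp (-d) * ‖B (j + 1)‖)).prod - 1) := by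
  intro m
  induction m with
  | zero => intro _ t _; simp
  | succ m ih =>
    intro hm1 t ht
    have hm : m ≤ N := by omega
    -- shorthand
    set Pm := ((List.range m).reverse.map (fun j => A (j + 1) + B (j + 1))).prod with hPm
    set Qm := ((List.range m).reverse.map (fun j => A (j + 1))).prod with hQm
    set Pim := ((List.range m).map (fun j => 1 + C * Real.exp (-d) * ‖B (j + 1)‖)).prod with hPim
    -- left-peel: prod over range (m+1) pulls out the factor at index m on the left
    have hlpeel : ∀ (g : ℕ → Matrix (Fin 2) (Fin 2) ℝ),
        ((List.range (m + 1)).reverse.map g).prod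
          = g m * ((List.range m).reverse.map g).prod := by
      intro g
      rw [List.range_succ]
      simp
    -- scalar product peel (on the right)
    have hfwd : ((List.range (m + 1)).map (fun j => 1 + C * Real.exp (-d) * ‖B (j + 1)‖)).prod
        = Pim * (1 + C * Real.exp (-d) * ‖B (m + 1)‖) := by
      rw [List.range_succ]
      simp [hPim]
    -- block right-peel: blk (m+1) (t+1) = blk (m+2) t * A (m+1)
    have hblk : ((List.range (t + 1)).reverse.map (fun i => A (m + 1 + i))).prod
        = ((List.range t).reverse.map (fun i => A (m + 2 + i))).prod * A (m + 1) := by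
      rw [List.range_succ_eq_map]
      have e : ((fun i => A (m + 1 + i)) ∘ Nat.succ) = (fun i : ℕ => A (m + 2 + i)) := by
        funext i
        simp only [Function.comp_apply]
        have h : m + 1 + Nat.succ i = m + 2 + i := by omega
        rw [h]
      simp [List.map_map, e]
    rw [hlpeel, hlpeel, hfwd]
    -- decomposition
    have hdecomp :
        ((List.range t).reverse.map (fun i => A (m + 1 + 1 + i))).prod *
            ((A (m + 1) + B (m + 1)) * Pm - A (m + 1) * Qm)
          = (((List.range t).reverse.map (fun i => A (m + 2 + i))).prod * A (m + 1)) * (Pm - Qm)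
            + ((List.range t).reverse.map (fun i => A (m + 2 + i))).prod * (B (m + 1) * Pm) := by
      have e : (fun i : ℕ => A (m + 1 + 1 + i)) = (fun i : ℕ => A (m + 2 + i)) := by
        funext i
        have h : m + 1 + 1 + i = m + 2 + i := by omega
        rw [h]
      rw [e]
      noncomm_ring
    rw [hdecomp, ← hblk]
    -- bounds
    have h1 := ih hm (t + 1) (by omega)
    push_cast at h1
    have hblk2 : ‖((List.range t).reverse.map (fun i => A (m + 2 + i))).prod‖
        ≤ C * Real.exp (d * t) := hA (m + 2) t (by omega) (by omega)
    have hQ : ‖Qm‖ ≤ C * Real.exp (d * m) := by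
      have h2 := hA 1 m (le_rfl) (by omega)
      have e : (fun i : ℕ => A (1 + i)) = (fun j : ℕ => A (j + 1)) := by
        funext i; rw [Nat.add_comm]
      rw [e] at h2
      exact h2
    have hPmQm : ‖Pm - Qm‖ ≤ C * Real.exp (d * m) * (Pim - 1) := by
      have h2 := ih hm 0 (by omega)
      simpa using h2
    have hPmn : ‖Pm‖ ≤ C * Real.exp (d * m) * Pim := by
      calc ‖Pm‖ ≤ ‖Qm‖ + ‖Pm - Qm‖ := by
              have := norm_add_le Qm (Pm - Qm); simpa using this
        _ ≤ C * Real.exp (d * m) + C * Real.exp (d * m) * (Pim - 1) := add_le_add hQ hPmQm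
        _ = C * Real.exp (d * m) * Pim := by ring
    have h2 : ‖((List.range t).reverse.map (fun i => A (m + 2 + i))).prod * (B (m + 1) * Pm)‖
        ≤ C * Real.exp (d * t) * (‖B (m + 1)‖ * (C * Real.exp (d * m) * Pim)) := by
      refine le_trans (norm_mul_le _ _) ?_
      refine mul_le_mul hblk2 ?_ (norm_nonneg _) (by positivity)
      refine le_trans (norm_mul_le _ _) ?_
      exact mul_le_mul_of_nonneg_left hPmn (norm_nonneg _)
    refine le_trans (norm_add_le _ _) (le_trans (add_le_add h1 h2) (le_of_eq ?_))
    -- scalar algebra: this is an exact identity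
    push_cast
    have e1 : Real.exp (d * ((m : ℝ) + ((t : ℝ) + 1)))
        = Real.exp (d * m) * Real.exp (d * t) * Real.exp d := by
      rw [← Real.exp_add, ← Real.exp_add]; congr 1; ring
    have e2 : Real.exp (d * ((m : ℝ) + 1 + (t : ℝ)))
        = Real.exp (d * m) * Real.exp (d * t) * Real.exp d := by
      rw [← Real.exp_add, ← Real.exp_add]; congr 1; ring
    rw [e1, e2, Real.exp_neg]
    have hne : Real.exp d ≠ 0 := Real.exp_ne_zero d
    field_simp
    ring
/-- Gordon-type perturbation lemma for products of 2×2 matrices (Simon):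
if all products of `ℓ` consecutive `A`'s starting at index `j` (indices `1,…,n`) satisfy
`‖A^{j+ℓ-1} ⋯ A^j‖ ≤ C e^{dℓ}`, then
`‖(Aⁿ+Bⁿ)⋯(A¹+B¹) − Aⁿ⋯A¹‖ ≤ C e^{dn} (∏_{j=1}^n (1 + C e^{-d} ‖B^j‖) − 1)`. -/
theorem stmt1 (n : ℕ) (A B : ℕ → Matrix (Fin 2) (Fin 2) ℝ) (C d : ℝ) (hC : 0 < C)
    (hA : ∀ j ℓ : ℕ, 1 ≤ j → j + ℓ ≤ n + 1 →
      ‖((List.range ℓ).reverse.map (fun i => A (j + i))).prod‖ ≤ C * Real.exp (d * ℓ)) :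
    ‖((List.range n).reverse.map (fun j => A (j + 1) + B (j + 1))).prod -
        ((List.range n).reverse.map (fun j => A (j + 1))).prod‖ ≤
      C * Real.exp (d * n) *
        (((List.range n).map (fun j => 1 + C * Real.exp (-d) * ‖B (j + 1)‖)).prod - 1) := by
  have h := gordon_aux n A B C d hC hA n le_rfl 0 (by omega)
  simpa using h
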